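/- For every integer k ≥ 1, setting m = k² + 3k + 1 and M = (m−1)/2, one has the identity t^{e(k,k)}·D_{k,k}(t) = (t² − 1)·Ψ_m(t) in ℤ[t, t⁻¹]; in particular D_{k,k}(t) = (t^{k²+3k+1} + 1)(t − 1). -/

import Mathlib

open LaurentPolynomial

/-- The Laurent polynomial `D_{n,k}(t) = -t^{(k+2)n+1} + t^{(k+1)(n+1)}(t^{k+1}+1)
- t^{k(n+3)+1} + t - 1` in `ℤ[t,t⁻¹]`. -/
noncomputable def D (n k : ℤ) : LaurentPolynomial ℤ :=
  -T ((k + 2) * n + 1) + T ((k + 1) * (n + 1)) * (T (k + 1) + 1) -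
    T (k * (n + 3) + 1) + T 1 - 1

/-- The exponent `e(n,k) = n(n-1)/2 + k(k-1) - 2nk`. -/
def e (n k : ℤ) : ℤ := n * (n - 1) / 2 + k * (k - 1) - 2 * n * k

/-- For odd `m ≥ 1` with `M = (m-1)/2`, the symmetric Laurent polynomial
`Ψ_m(t) = ∑_{j=-M}^{M} (-1)^{M+j} t^j`. -/
noncomputable def Psi (m : ℤ) : LaurentPolynomial ℤ :=
  ∑ j ∈ Finset.Icc (-((m - 1) / 2)) ((m - 1) / 2),
    ((((m - 1) / 2 + j).negOnePow : ℤ) : LaurentPolynomial ℤ) * T j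

lemma key (n : ℕ) :
    (T 1 + 1) * ∑ j ∈ Finset.Icc (-(n:ℤ)) (n:ℤ),
      ((((n:ℤ) + j).negOnePow : ℤ) : LaurentPolynomial ℤ) * T j
      = T ((n:ℤ) + 1) + T (-(n:ℤ)) := by
  induction n with
  | zero => simp
  | succ n ih =>
    have hc : ((n+1 : ℕ) : ℤ) = (n:ℤ) + 1 := by push_cast; ring
    rw [hc]
    set M : ℤ := (n:ℤ) with hMdef
    have hset : Finset.Icc (-(M+1)) (M+1)
        = insert (-(M+1)) (insert (M+1) (Finset.Icc (-M) M)) := by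
      have h0 : (0:ℤ) ≤ M := Int.natCast_nonneg n
      ext x; simp only [Finset.mem_Icc, Finset.mem_insert]; omega
    have h1 : (-(M+1)) ∉ insert (M+1) (Finset.Icc (-M) M) := by
      have h0 : (0:ℤ) ≤ M := Int.natCast_nonneg n
      simp only [Finset.mem_Icc, Finset.mem_insert]; omega
    have h2 : (M+1) ∉ Finset.Icc (-M) M := by
      simp only [Finset.mem_Icc]; omega
    rw [hset, Finset.sum_insert h1, Finset.sum_insert h2]
    have hco : ∀ j : ℤ, ((M + 1 + j).negOnePow : ℤ) = -((M + j).negOnePow : ℤ) := by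
      intro j
      rw [show M + 1 + j = M + j + 1 from by ring, Int.negOnePow_succ]
      simp
    have hsum : ∑ j ∈ Finset.Icc (-M) M,
        (((M + 1 + j).negOnePow : ℤ) : LaurentPolynomial ℤ) * T j
        = -∑ j ∈ Finset.Icc (-M) M,
          (((M + j).negOnePow : ℤ) : LaurentPolynomial ℤ) * T j := by
      rw [← Finset.sum_neg_distrib]
      refine Finset.sum_congr rfl fun j _ => ?_
      rw [hco j]; push_cast; ring
    rw [hsum]
    have hc1 : ((M + 1 + -(M+1)).negOnePow : ℤ) = 1 := by
      rw [show M + 1 + -(M+1) = 0 from by ring]; simp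
    have hc2 : ((M + 1 + (M+1)).negOnePow : ℤ) = 1 := by
      rw [show M + 1 + (M+1) = 2*(M+1) from by ring]; simp [Int.negOnePow_two_mul]
    rw [hc1, hc2]
    push_cast
    rw [mul_add, mul_add, mul_neg, ih]
    have hT : ∀ a b : ℤ, (T a : LaurentPolynomial ℤ) * T b = T (a + b) := fun a b =>
      (T_add a b).symm
    have e1 : (T 1 + 1 : LaurentPolynomial ℤ) * (1 * T (-(M+1)))
        = T (-M) + T (-(M+1)) := by
      rw [one_mul, add_mul, one_mul, hT]; ring_nf
    have e2 : (T 1 + 1 : LaurentPolynomial ℤ) * (1 * T (M+1))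
        = T (M+2) + T (M+1) := by
      rw [one_mul, add_mul, one_mul, hT]; ring_nf
    rw [e1, e2]
    ring_nf

/-- For `k ≥ 1`, with `m = k² + 3k + 1`, one has
`t^{e(k,k)} · D_{k,k}(t) = (t² - 1) · Ψ_m(t)`; in particular
`D_{k,k}(t) = (t^{k²+3k+1} + 1)(t - 1)`. -/
theorem D_k_k_eq (k : ℤ) (hk : 1 ≤ k) :
    T (e k k) * D k k = (T 2 - 1) * Psi (k ^ 2 + 3 * k + 1) ∧
    D k k = (T (k ^ 2 + 3 * k + 1) + 1) * (T 1 - 1) := by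
  obtain ⟨M, hM⟩ : ∃ M, k ^ 2 + 3 * k = 2 * M := by
    obtain ⟨N, hN⟩ := Int.even_mul_succ_self k
    exact ⟨N + k, by nlinarith⟩
  obtain ⟨N, hN⟩ : ∃ N, k * (k - 1) = 2 * N := by
    obtain ⟨N, hN⟩ := Int.even_mul_succ_self (k - 1)
    exact ⟨N, by nlinarith⟩
  have hMpos : 0 ≤ M := by nlinarith
  have hT : ∀ a b : ℤ, (T a : LaurentPolynomial ℤ) * T b = T (a + b) := fun a b =>
    (T_add a b).symm
  have hD : D k k = (T (k ^ 2 + 3 * k + 1) + 1) * (T 1 - 1) := by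
    unfold D
    rw [show (k+2)*k+1 = k^2+2*k+1 from by ring,
      show (k+1)*(k+1) = k^2+2*k+1 from by ring,
      show k*(k+3)+1 = k^2+3*k+1 from by ring]
    rw [mul_add, mul_one, hT, mul_sub, add_mul, one_mul, mul_one, hT]
    rw [show k^2+2*k+1+(k+1) = k^2+3*k+2 from by ring,
      show k^2+3*k+1+1 = k^2+3*k+2 from by ring]
    ring
  refine ⟨?_, hD⟩
  have he : e k k = -M := by
    unfold e
    rw [hN, Int.mul_ediv_cancel_left N two_ne_zero]
    have h1 : k * (k - 1) = k ^ 2 - k := by ring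
    have h2 : 2 * k * k = 2 * k ^ 2 := by ring
    linarith [hM, hN, h1, h2]
  have hdiv : (k ^ 2 + 3 * k + 1 - 1) / 2 = M := by
    rw [show k ^ 2 + 3 * k + 1 - 1 = 2 * M from by linarith]
    exact Int.mul_ediv_cancel_left M two_ne_zero
  have hPsi : (T 1 + 1) * Psi (k ^ 2 + 3 * k + 1) = T (M + 1) + T (-M) := by
    unfold Psi
    rw [hdiv]
    obtain ⟨n, rfl⟩ := Int.eq_ofNat_of_zero_le hMpos
    exact key n
  have hT2 : (T 2 - 1 : LaurentPolynomial ℤ) = (T 1 - 1) * (T 1 + 1) := by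
    rw [show (2:ℤ) = 1 + 1 from rfl, T_add]; ring
  rw [hD, he, hT2, mul_assoc, hPsi]
  rw [show (T (-M) : LaurentPolynomial ℤ) * ((T (k^2+3*k+1) + 1) * (T 1 - 1))
    = (T (-M) * (T (k^2+3*k+1) + 1)) * (T 1 - 1) from by ring]
  rw [mul_add, mul_one, hT, show -M + (k^2+3*k+1) = M + 1 from by linarith]
  ring
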